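/- Let m ≥ 2 and n ≥ 2 be integers, let A_0,…,A_{m−1} be N₁×N₂ real matrices and B_0,…,B_{n−1} be N₂×N₃ real matrices, and set p_A(x) = Σ_{i=0}^{m−1} A_i T_i(x) and p_B(x) = Σ_{j=0}^{n−1} B_j T_{jm}(x). Then p_A p_B has degree at most mn−1, and in its unique entrywise Chebyshev expansion p_A(x)p_B(x) = Σ_{t=0}^{mn−1} D_t T_t(x) the coefficients are: D_0 = A_0B_0; D_{jm} = A_0B_j for 1 ≤ j ≤ n−1; for 1 ≤ i ≤ m−1: D_i = A_iB_0 + (1/2)A_{m−i}B_1, D_{jm+i} = (1/2)A_iB_j + (1/2)A_{m−i}B_{j+1} for 1 ≤ j ≤ n−2, and D_{(n−1)m+i} = (1/2)A_iB_{n−1}. In particular, every product A_iB_j can be recovered as an explicit linear combination of the coefficients D_0,…,D_{mn−1}. -/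

import Mathlib

open Polynomial


lemma chebT_deg (k : ℕ) : (Chebyshev.T ℝ (k:ℤ)).natDegree ≤ k ∧
    (Chebyshev.T ℝ (k:ℤ)).coeff k = if k = 0 then 1 else 2^(k-1) := by
  induction k using Nat.strong_induction_on with
  | _ k ih =>
    match k with
    | 0 => simp [Chebyshev.T_zero]
    | 1 => simp [Chebyshev.T_one]
    | (k+2) =>
      obtain ⟨hd1, hc1⟩ := ih (k+1) (by omega)
      obtain ⟨hd0, hc0⟩ := ih k (by omega)
      have hT : Chebyshev.T ℝ ((k+2 : ℕ):ℤ) =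
          2 * X * Chebyshev.T ℝ ((k+1:ℕ):ℤ) - Chebyshev.T ℝ ((k:ℕ):ℤ) := by
        have := Chebyshev.T_add_two ℝ (k:ℤ)
        push_cast
        exact this
      have h2X : (2 * X : ℝ[X]).natDegree = 1 := by
        rw [show (2 * X : ℝ[X]) = C 2 * X by norm_cast, natDegree_C_mul (by norm_num), natDegree_X]
      rw [hT]
      constructor
      · refine le_trans (natDegree_sub_le _ _) (max_le ?_ (by omega))
        refine le_trans natDegree_mul_le ?_
        omega
      · have e1 : (2 * X * Chebyshev.T ℝ ((k+1:ℕ):ℤ)).coeff (k+2)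
            = 2 * (Chebyshev.T ℝ ((k+1:ℕ):ℤ)).coeff (k+1) := by
          rw [mul_assoc, show (2:ℝ[X]) = C 2 by norm_cast, coeff_C_mul, coeff_X_mul]
        have e2 : (Chebyshev.T ℝ ((k:ℕ):ℤ)).coeff (k+2) = 0 :=
          coeff_eq_zero_of_natDegree_lt (by omega)
        rw [coeff_sub, e1, e2, hc1]
        simp [pow_succ]
        ring

lemma chebT_li (M : ℕ) (c : ℕ → ℝ)
    (h : ∑ u ∈ Finset.range M, Polynomial.C (c u) * Chebyshev.T ℝ (u:ℤ) = 0) :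
    ∀ u < M, c u = 0 := by
  induction M with
  | zero => omega
  | succ M ih =>
    have hM : c M = 0 := by
      have hco := congrArg (fun p => Polynomial.coeff p M) h
      simp only [Finset.sum_range_succ, coeff_add, finset_sum_coeff, coeff_C_mul, coeff_zero] at hco
      rw [Finset.sum_eq_zero (fun u hu => by
        rw [coeff_eq_zero_of_natDegree_lt (lt_of_le_of_lt (chebT_deg u).1 (Finset.mem_range.mp hu)),
          mul_zero])] at hco
      rw [(chebT_deg M).2] at hco
      rcases Nat.eq_zero_or_pos M with h0 | h0
      · simpa [h0] using hco
      · have : (2:ℝ)^(M-1) ≠ 0 := by positivity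
        simp only [zero_add, if_neg (by omega : ¬ M = 0)] at hco
        rcases mul_eq_zero.mp hco with h2 | h2
        · exact h2
        · exact absurd h2 this
    have h' : ∑ u ∈ Finset.range M, Polynomial.C (c u) * Chebyshev.T ℝ (u:ℤ) = 0 := by
      rw [Finset.sum_range_succ, hM] at h
      simpa using h
    intro u hu
    rcases Nat.lt_succ_iff_lt_or_eq.mp hu with h1 | h1
    · exact ih h' u h1
    · exact h1 ▸ hM

lemma chebT_fun_li {N₁ N₃ : ℕ} (M : ℕ) (E : ℕ → Matrix (Fin N₁) (Fin N₃) ℝ)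
    (h : ∀ x : ℝ, ∑ u ∈ Finset.range M, (Chebyshev.T ℝ (u:ℤ)).eval x • E u = 0) :
    ∀ u < M, E u = 0 := by
  intro u hu
  ext a b
  have key : ∀ x : ℝ, (∑ v ∈ Finset.range M,
      Polynomial.C (E v a b) * Chebyshev.T ℝ (v:ℤ)).eval x = (0:ℝ[X]).eval x := by
    intro x
    have := congrFun (congrFun (h x) a) b
    simp only [Matrix.sum_apply, Matrix.smul_apply, Matrix.zero_apply, smul_eq_mul] at this
    simp only [eval_finset_sum, eval_mul, eval_C, eval_zero]
    rw [← this]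
    exact Finset.sum_congr rfl (fun v _ => mul_comm _ _)
  have hp := Polynomial.funext key
  have := chebT_li M (fun v => E v a b) hp u hu
  simpa using this


noncomputable def g1 (m u i j : ℕ) : ℝ :=
  if u = j*m+i then (if i = 0 ∨ j = 0 then 1 else 1/2) else 0

noncomputable def g2 (m u i j : ℕ) : ℝ :=
  if 1 ≤ i ∧ 1 ≤ j ∧ u + i = j*m then 1/2 else 0

lemma keymul (m n : ℕ) (hm : 2 ≤ m) (hn : 2 ≤ n) (x : ℝ) (i j : ℕ) (hi : i < m) (hj : j < n) :
    (Chebyshev.T ℝ (i:ℤ)).eval x * (Chebyshev.T ℝ ((j*m:ℕ):ℤ)).eval x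
    = ∑ u ∈ Finset.range (m*n), (g1 m u i j + g2 m u i j) * (Chebyshev.T ℝ (u:ℤ)).eval x := by
  have hmem : j*m+i ∈ Finset.range (m*n) := by
    simp only [Finset.mem_range]
    calc j*m+i < j*m+m := by omega
    _ = (j+1)*m := by ring
    _ ≤ n*m := Nat.mul_le_mul_right m (by omega)
    _ = m*n := Nat.mul_comm n m
  simp only [add_mul]
  rw [Finset.sum_add_distrib]
  obtain ⟨c, hc⟩ : ∃ c : ℝ, (if i = 0 ∨ j = 0 then (1:ℝ) else 1/2) = c := ⟨_, rfl⟩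
  have hS1 : ∑ u ∈ Finset.range (m*n), g1 m u i j * (Chebyshev.T ℝ (u:ℤ)).eval x
      = c * (Chebyshev.T ℝ ((j*m+i:ℕ):ℤ)).eval x := by
    simp only [g1, hc, ite_mul, zero_mul]
    rw [Finset.sum_ite_eq' (Finset.range (m*n)) (j*m+i)
      (fun u => c * (Chebyshev.T ℝ (u:ℤ)).eval x), if_pos hmem]
  rw [hS1]
  by_cases hij : 1 ≤ i ∧ 1 ≤ j
  · obtain ⟨hi1, hj1⟩ := hij
    have him : i ≤ j*m := le_trans (le_of_lt hi) (Nat.le_mul_of_pos_left m hj1)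
    have hS2 : ∑ u ∈ Finset.range (m*n), g2 m u i j * (Chebyshev.T ℝ (u:ℤ)).eval x
        = (1/2) * (Chebyshev.T ℝ ((j*m-i:ℕ):ℤ)).eval x := by
      have hg2 : ∀ u, g2 m u i j = if u = j*m - i then (1/2:ℝ) else 0 := by
        intro u
        simp only [g2]
        have : (1 ≤ i ∧ 1 ≤ j ∧ u + i = j*m) ↔ u = j*m - i := by
          generalize j*m = J at him ⊢
          omega
        rw [if_congr this rfl rfl]
      simp only [hg2, ite_mul, zero_mul]
      rw [Finset.sum_ite_eq' (Finset.range (m*n)) (j*m-i)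
        (fun u => (1/2:ℝ) * (Chebyshev.T ℝ (u:ℤ)).eval x), if_pos]
      simp only [Finset.mem_range] at hmem ⊢
      omega
    rw [hS2]
    rw [if_neg (by omega)] at hc
    subst hc
    have hmt := Chebyshev.T_mul_T (R := ℝ) ((j*m : ℕ):ℤ) (i:ℤ)
    have := congrArg (eval x) hmt
    simp only [eval_mul, eval_add, eval_ofNat] at this
    have hc1 : ((j*m : ℕ):ℤ) + (i:ℤ) = ((j*m+i : ℕ):ℤ) := by push_cast; ring
    have hc2 : ((j*m : ℕ):ℤ) - (i:ℤ) = ((j*m-i : ℕ):ℤ) := by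
      push_cast [Nat.cast_sub him]; ring
    rw [hc1, hc2] at this
    nlinarith [this]
  · have hS2 : ∑ u ∈ Finset.range (m*n), g2 m u i j * (Chebyshev.T ℝ (u:ℤ)).eval x = 0 := by
      refine Finset.sum_eq_zero fun u _ => ?_
      simp only [g2]
      rw [if_neg (by tauto : ¬(1 ≤ i ∧ 1 ≤ j ∧ u + i = j*m)), zero_mul]
    rw [hS2, add_zero]
    rw [if_pos (by omega)] at hc
    subst hc
    rcases Nat.eq_zero_or_pos i with h0 | h0
    · subst h0
      simp [Chebyshev.T_zero]
    · have hj0 : j = 0 := by omega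
      subst hj0
      simp [Chebyshev.T_zero]

noncomputable def DD (m n N₁ N₂ N₃ : ℕ) (A : Fin m → Matrix (Fin N₁) (Fin N₂) ℝ)
    (B : Fin n → Matrix (Fin N₂) (Fin N₃) ℝ) (u : ℕ) : Matrix (Fin N₁) (Fin N₃) ℝ :=
  ∑ p : Fin n × Fin m, (g1 m u (p.2:ℕ) (p.1:ℕ) + g2 m u (p.2:ℕ) (p.1:ℕ)) • (A p.2 * B p.1)

lemma expand (m n N₁ N₂ N₃ : ℕ) (hm : 2 ≤ m) (hn : 2 ≤ n)
    (A : Fin m → Matrix (Fin N₁) (Fin N₂) ℝ) (B : Fin n → Matrix (Fin N₂) (Fin N₃) ℝ) (x : ℝ) :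
    (∑ i : Fin m, (Chebyshev.T ℝ ((i:ℕ):ℤ)).eval x • A i) *
      (∑ j : Fin n, (Chebyshev.T ℝ (((j:ℕ)*m:ℕ):ℤ)).eval x • B j)
    = ∑ u ∈ Finset.range (m*n), (Chebyshev.T ℝ (u:ℤ)).eval x • DD m n N₁ N₂ N₃ A B u := by
  rw [Matrix.sum_mul]
  simp only [Matrix.mul_sum]
  calc ∑ i : Fin m, ∑ j : Fin n, ((Chebyshev.T ℝ ((i:ℕ):ℤ)).eval x • A i) *
        ((Chebyshev.T ℝ (((j:ℕ)*m:ℕ):ℤ)).eval x • B j)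
      = ∑ i : Fin m, ∑ j : Fin n, ∑ u ∈ Finset.range (m*n),
          ((g1 m u (i:ℕ) (j:ℕ) + g2 m u (i:ℕ) (j:ℕ)) * (Chebyshev.T ℝ (u:ℤ)).eval x) •
            (A i * B j) := by
        refine Finset.sum_congr rfl fun i _ => Finset.sum_congr rfl fun j _ => ?_
        rw [Matrix.smul_mul, Matrix.mul_smul, smul_smul,
          keymul m n hm hn x i j i.isLt j.isLt, Finset.sum_smul]
    _ = ∑ u ∈ Finset.range (m*n), ∑ j : Fin n, ∑ i : Fin m,
          ((g1 m u (i:ℕ) (j:ℕ) + g2 m u (i:ℕ) (j:ℕ)) * (Chebyshev.T ℝ (u:ℤ)).eval x) •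
            (A i * B j) := by
        calc ∑ i : Fin m, ∑ j : Fin n, ∑ u ∈ Finset.range (m*n),
              ((g1 m u (i:ℕ) (j:ℕ) + g2 m u (i:ℕ) (j:ℕ)) * (Chebyshev.T ℝ (u:ℤ)).eval x) •
                (A i * B j)
            = ∑ i : Fin m, ∑ u ∈ Finset.range (m*n), ∑ j : Fin n,
              ((g1 m u (i:ℕ) (j:ℕ) + g2 m u (i:ℕ) (j:ℕ)) * (Chebyshev.T ℝ (u:ℤ)).eval x) •
                (A i * B j) := Finset.sum_congr rfl fun i _ => Finset.sum_comm
          _ = ∑ u ∈ Finset.range (m*n), ∑ i : Fin m, ∑ j : Fin n,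
              ((g1 m u (i:ℕ) (j:ℕ) + g2 m u (i:ℕ) (j:ℕ)) * (Chebyshev.T ℝ (u:ℤ)).eval x) •
                (A i * B j) := Finset.sum_comm
          _ = ∑ u ∈ Finset.range (m*n), ∑ j : Fin n, ∑ i : Fin m,
              ((g1 m u (i:ℕ) (j:ℕ) + g2 m u (i:ℕ) (j:ℕ)) * (Chebyshev.T ℝ (u:ℤ)).eval x) •
                (A i * B j) := Finset.sum_congr rfl fun u _ => Finset.sum_comm
    _ = ∑ u ∈ Finset.range (m*n), (Chebyshev.T ℝ (u:ℤ)).eval x • DD m n N₁ N₂ N₃ A B u := by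
        refine Finset.sum_congr rfl fun u _ => ?_
        rw [DD, Finset.smul_sum, Fintype.sum_prod_type]
        refine Finset.sum_congr rfl fun j _ => Finset.sum_congr rfl fun i _ => ?_
        rw [smul_smul, mul_comm ((Chebyshev.T ℝ (u:ℤ)).eval x)]

lemma hdm (m : ℕ) (hm : 0 < m) (j i j' i' : ℕ) (hi : i < m) (hi' : i' < m)
    (h : j*m+i = j'*m+i') : j = j' ∧ i = i' := by
  have e1 : (j*m+i) % m = i := by
    rw [Nat.add_comm, Nat.add_mul_mod_self_right, Nat.mod_eq_of_lt hi]
  have e2 : (j'*m+i') % m = i' := by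
    rw [Nat.add_comm, Nat.add_mul_mod_self_right, Nat.mod_eq_of_lt hi']
  have e3 : (j*m+i) / m = j := by
    rw [Nat.add_comm, Nat.add_mul_div_right _ _ hm, Nat.div_eq_of_lt hi, Nat.zero_add]
  have e4 : (j'*m+i') / m = j' := by
    rw [Nat.add_comm, Nat.add_mul_div_right _ _ hm, Nat.div_eq_of_lt hi', Nat.zero_add]
  constructor
  · rw [← e3, ← e4, h]
  · rw [← e1, ← e2, h]

lemma arith (m : ℕ) (hm : 2 ≤ m) (j i j' i' : ℕ) (hi : i < m) (hi' : i' < m)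
    (h1 : 1 ≤ i) (h1' : 1 ≤ i') (heq : j*m + i + i' = j'*m) : i' = m - i ∧ j' = j + 1 := by
  have hs : i + i' = m := by
    have h2 : ((i+i') + j*m) % m = (j'*m) % m := by
      rw [show (i+i') + j*m = j'*m from by omega]
    rw [Nat.add_mul_mod_self_right, Nat.mul_mod_left] at h2
    have hlt : i + i' < 2*m := by omega
    rcases lt_or_ge (i+i') m with hl | hl
    · rw [Nat.mod_eq_of_lt hl] at h2; omega
    · rw [Nat.mod_eq_sub_mod hl, Nat.mod_eq_of_lt (by omega)] at h2; omega
  refine ⟨by omega, ?_⟩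
  have : (j+1)*m = j'*m := by
    have h3 : (j+1)*m = j*m + m := by ring
    omega
  exact (Nat.eq_of_mul_eq_mul_right (by omega) this).symm

lemma DDsplit (m n N₁ N₂ N₃ : ℕ) (A : Fin m → Matrix (Fin N₁) (Fin N₂) ℝ)
    (B : Fin n → Matrix (Fin N₂) (Fin N₃) ℝ) (u : ℕ) :
    DD m n N₁ N₂ N₃ A B u
      = (∑ p : Fin n × Fin m, g1 m u (p.2:ℕ) (p.1:ℕ) • (A p.2 * B p.1))
      + (∑ p : Fin n × Fin m, g2 m u (p.2:ℕ) (p.1:ℕ) • (A p.2 * B p.1)) := by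
  rw [DD, ← Finset.sum_add_distrib]
  exact Finset.sum_congr rfl fun p _ => add_smul _ _ _

lemma DDg1 (m n N₁ N₂ N₃ : ℕ) (hm : 2 ≤ m) (A : Fin m → Matrix (Fin N₁) (Fin N₂) ℝ)
    (B : Fin n → Matrix (Fin N₂) (Fin N₃) ℝ) (j i : ℕ) (hj : j < n) (hi : i < m) :
    (∑ p : Fin n × Fin m, g1 m (j*m+i) (p.2:ℕ) (p.1:ℕ) • (A p.2 * B p.1))
      = (if i = 0 ∨ j = 0 then (1:ℝ) else 1/2) • (A ⟨i,hi⟩ * B ⟨j,hj⟩) := by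
  rw [Finset.sum_eq_single ((⟨j,hj⟩,⟨i,hi⟩) : Fin n × Fin m)]
  · simp [g1]
  · intro p _ hne
    simp only [g1]
    rw [if_neg, zero_smul]
    intro h
    obtain ⟨h1, h2⟩ := hdm m (by omega) j i (p.1:ℕ) (p.2:ℕ) hi p.2.isLt h
    exact hne (by ext <;> simp [← h1, ← h2])
  · intro h; exact absurd (Finset.mem_univ _) h

lemma DDg2a (m n N₁ N₂ N₃ : ℕ) (hm : 2 ≤ m) (A : Fin m → Matrix (Fin N₁) (Fin N₂) ℝ)
    (B : Fin n → Matrix (Fin N₂) (Fin N₃) ℝ) (j i : ℕ) (h1 : 1 ≤ i) (hi : i < m)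
    (hj : j + 1 < n) :
    (∑ p : Fin n × Fin m, g2 m (j*m+i) (p.2:ℕ) (p.1:ℕ) • (A p.2 * B p.1))
      = (1/2:ℝ) • (A ⟨m-i, by omega⟩ * B ⟨j+1, hj⟩) := by
  rw [Finset.sum_eq_single ((⟨j+1,hj⟩,⟨m-i, by omega⟩) : Fin n × Fin m)]
  · simp only [g2]
    rw [if_pos]
    refine ⟨by omega, by omega, ?_⟩
    have : j*m+i+(m-i) = (j+1)*m := by rw [Nat.succ_mul]; omega
    simpa using this
  · intro p _ hne
    simp only [g2]
    rw [if_neg, zero_smul]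
    rintro ⟨ha, hb, hc⟩
    obtain ⟨h1', h2'⟩ := arith m hm j i (p.1:ℕ) (p.2:ℕ) hi p.2.isLt h1 ha (by omega)
    exact hne (by ext <;> simp [h1', h2'])
  · intro h; exact absurd (Finset.mem_univ _) h

lemma DDg2z0 (m n N₁ N₂ N₃ : ℕ) (hm : 2 ≤ m) (A : Fin m → Matrix (Fin N₁) (Fin N₂) ℝ)
    (B : Fin n → Matrix (Fin N₂) (Fin N₃) ℝ) (j : ℕ) :
    (∑ p : Fin n × Fin m, g2 m (j*m) (p.2:ℕ) (p.1:ℕ) • (A p.2 * B p.1)) = 0 := by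
  refine Finset.sum_eq_zero fun p _ => ?_
  simp only [g2]
  rw [if_neg, zero_smul]
  rintro ⟨ha, hb, hc⟩
  have h2 : ((p.2:ℕ) + j*m) % m = ((p.1:ℕ)*m) % m := by
    rw [show (p.2:ℕ) + j*m = (p.1:ℕ)*m from by omega]
  rw [Nat.add_mul_mod_self_right, Nat.mul_mod_left, Nat.mod_eq_of_lt p.2.isLt] at h2
  omega

lemma DDg2ztop (m n N₁ N₂ N₃ : ℕ) (hm : 2 ≤ m) (hn : 2 ≤ n)
    (A : Fin m → Matrix (Fin N₁) (Fin N₂) ℝ)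
    (B : Fin n → Matrix (Fin N₂) (Fin N₃) ℝ) (i : ℕ) (h1 : 1 ≤ i) (hi : i < m) :
    (∑ p : Fin n × Fin m, g2 m ((n-1)*m+i) (p.2:ℕ) (p.1:ℕ) • (A p.2 * B p.1)) = 0 := by
  refine Finset.sum_eq_zero fun p _ => ?_
  simp only [g2]
  rw [if_neg, zero_smul]
  rintro ⟨ha, hb, hc⟩
  obtain ⟨h1', h2'⟩ := arith m hm (n-1) i (p.1:ℕ) (p.2:ℕ) hi p.2.isLt h1 ha (by omega)
  have := p.1.isLt
  omega

lemma idxlt (m n j i : ℕ) (hj : j < n) (hi : i < m) : j*m+i < m*n :=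
  calc j*m+i < j*m+m := by omega
  _ = (j+1)*m := by ring
  _ ≤ n*m := Nat.mul_le_mul_right m (by omega)
  _ = m*n := Nat.mul_comm n m

lemma KEY (m n N₁ N₂ N₃ : ℕ) (hm : 2 ≤ m) (hn : 2 ≤ n)
    (A : Fin m → Matrix (Fin N₁) (Fin N₂) ℝ) (B : Fin n → Matrix (Fin N₂) (Fin N₃) ℝ)
    (Dc : ℕ → Matrix (Fin N₁) (Fin N₃) ℝ)
    (h : ∀ x : ℝ, (∑ i : Fin m, (Chebyshev.T ℝ ((i:ℕ):ℤ)).eval x • A i) *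
      (∑ j : Fin n, (Chebyshev.T ℝ (((j:ℕ)*m:ℕ):ℤ)).eval x • B j)
      = ∑ u ∈ Finset.range (m*n), (Chebyshev.T ℝ (u:ℤ)).eval x • Dc u) :
    ∀ u < m*n, Dc u = DD m n N₁ N₂ N₃ A B u := by
  intro u hu
  have h0 : ∀ x : ℝ, ∑ u ∈ Finset.range (m*n), (Chebyshev.T ℝ (u:ℤ)).eval x •
      (Dc u - DD m n N₁ N₂ N₃ A B u) = 0 := by
    intro x
    have e := (h x).symm.trans (expand m n N₁ N₂ N₃ hm hn A B x)
    rw [← sub_eq_zero] at e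
    rw [← e, ← Finset.sum_sub_distrib]
    exact Finset.sum_congr rfl fun u _ => smul_sub _ _ _
  have := chebT_fun_li (m*n) _ h0 u hu
  rwa [sub_eq_zero] at this

lemma FORM (m n N₁ N₂ N₃ : ℕ) (hm : 2 ≤ m) (hn : 2 ≤ n)
    (A : Fin m → Matrix (Fin N₁) (Fin N₂) ℝ) (B : Fin n → Matrix (Fin N₂) (Fin N₃) ℝ)
    (Dc : ℕ → Matrix (Fin N₁) (Fin N₃) ℝ)
    (h : ∀ x : ℝ, (∑ i : Fin m, (Chebyshev.T ℝ ((i:ℕ):ℤ)).eval x • A i) *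
      (∑ j : Fin n, (Chebyshev.T ℝ (((j:ℕ)*m:ℕ):ℤ)).eval x • B j)
      = ∑ u ∈ Finset.range (m*n), (Chebyshev.T ℝ (u:ℤ)).eval x • Dc u) :
      Dc 0 = A ⟨0, by have := 0; omega⟩ * B ⟨0, by have := 0; omega⟩ ∧
      (∀ (j : ℕ) (_hj1 : 1 ≤ j) (_hj2 : j ≤ n - 1),
        Dc (j * m) = A ⟨0, by have := 0; omega⟩ * B ⟨j, by have := 0; omega⟩) ∧
      (∀ (i : ℕ) (_hi1 : 1 ≤ i) (_hi2 : i ≤ m - 1),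
        Dc i = A ⟨i, by have := 0; omega⟩ * B ⟨0, by have := 0; omega⟩ +
          (1 / 2 : ℝ) • (A ⟨m - i, by have := 0; omega⟩ * B ⟨1, by have := 0; omega⟩)) ∧
      (∀ (i : ℕ) (_hi1 : 1 ≤ i) (_hi2 : i ≤ m - 1) (j : ℕ) (_hj1 : 1 ≤ j) (_hj2 : j ≤ n - 2),
        Dc (j * m + i) = (1 / 2 : ℝ) • (A ⟨i, by have := 0; omega⟩ * B ⟨j, by have := 0; omega⟩) +
          (1 / 2 : ℝ) • (A ⟨m - i, by have := 0; omega⟩ * B ⟨j + 1, by have := 0; omega⟩)) ∧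
      (∀ (i : ℕ) (_hi1 : 1 ≤ i) (_hi2 : i ≤ m - 1),
        Dc ((n - 1) * m + i) = (1 / 2 : ℝ) • (A ⟨i, by have := 0; omega⟩ * B ⟨n - 1, by have := 0; omega⟩)) := by
  have key := KEY m n N₁ N₂ N₃ hm hn A B Dc h
  refine ⟨?_, ?_, ?_, ?_, ?_⟩
  · have e := key 0 (by positivity)
    have h1 := DDg1 m n N₁ N₂ N₃ hm A B 0 0 (by omega) (by omega)
    have h2 := DDg2z0 m n N₁ N₂ N₃ hm A B 0
    simp only [Nat.zero_mul, Nat.add_zero] at h1 h2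
    rw [e, DDsplit, h1, h2, add_zero]
    simp
  · intro j hj1 hj2
    have e := key (j*m) (by have := idxlt m n j 0 (by omega) (by omega); simpa using this)
    have h1 := DDg1 m n N₁ N₂ N₃ hm A B j 0 (by omega) (by omega)
    have h2 := DDg2z0 m n N₁ N₂ N₃ hm A B j
    simp only [Nat.add_zero] at h1
    rw [e, DDsplit, h1, h2, add_zero]
    simp
  · intro i hi1 hi2
    have e := key i (by have := idxlt m n 0 i (by omega) (by omega); simpa using this)
    have h1 := DDg1 m n N₁ N₂ N₃ hm A B 0 i (by omega) (by omega)
    have h2 := DDg2a m n N₁ N₂ N₃ hm A B 0 i (by omega) (by omega) (by omega)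
    simp only [Nat.zero_mul, Nat.zero_add] at h1 h2
    rw [e, DDsplit, h1, h2]
    simp
  · intro i hi1 hi2 j hj1 hj2
    have e := key (j*m+i) (idxlt m n j i (by omega) (by omega))
    have h1 := DDg1 m n N₁ N₂ N₃ hm A B j i (by omega) (by omega)
    have h2 := DDg2a m n N₁ N₂ N₃ hm A B j i (by omega) (by omega) (by omega)
    rw [e, DDsplit, h1, h2, if_neg (by omega)]
  · intro i hi1 hi2
    have e := key ((n-1)*m+i) (idxlt m n (n-1) i (by omega) (by omega))
    have h1 := DDg1 m n N₁ N₂ N₃ hm A B (n-1) i (by omega) (by omega)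
    have h2 := DDg2ztop m n N₁ N₂ N₃ hm hn A B i (by omega) (by omega)
    rw [e, DDsplit, h1, h2, add_zero, if_neg (by omega)]

lemma hindsum (m n N₁ N₃ : ℕ) (r : ℝ) (k : ℕ) (hk : k < m*n)
    (Dc : ℕ → Matrix (Fin N₁) (Fin N₃) ℝ) :
    ∑ u ∈ Finset.range (m*n), (if u = k then r else 0) • Dc u = r • Dc k := by
  simp only [ite_smul, zero_smul]
  rw [Finset.sum_ite_eq' (Finset.range (m*n)) k (fun u => r • Dc u),
    if_pos (Finset.mem_range.mpr hk)]

lemma RECOV (m n N₁ N₂ N₃ : ℕ) (hm : 2 ≤ m) (hn : 2 ≤ n) :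
    ∀ i : Fin m, ∀ j : Fin n, ∃ c : ℕ → ℝ,
      ∀ (A' : Fin m → Matrix (Fin N₁) (Fin N₂) ℝ)
        (B' : Fin n → Matrix (Fin N₂) (Fin N₃) ℝ)
        (Dc : ℕ → Matrix (Fin N₁) (Fin N₃) ℝ),
        (∀ x : ℝ,
          (∑ i' : Fin m, (Chebyshev.T ℝ ((i' : ℕ) : ℤ)).eval x • A' i') *
            (∑ j' : Fin n, (Chebyshev.T ℝ (((j' : ℕ) * m : ℕ) : ℤ)).eval x • B' j') =
          ∑ u ∈ Finset.range (m * n), (Chebyshev.T ℝ (u : ℕ)).eval x • Dc u) →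
        A' i * B' j = ∑ u ∈ Finset.range (m * n), c u • Dc u := by
  have claim : ∀ k : ℕ, ∀ i j : ℕ, ∀ (hi1 : 1 ≤ i) (hi2 : i ≤ m-1) (hj1 : 1 ≤ j)
      (hj2 : j ≤ n-1), n-1-j ≤ k → ∃ c : ℕ → ℝ,
      ∀ (A' : Fin m → Matrix (Fin N₁) (Fin N₂) ℝ)
        (B' : Fin n → Matrix (Fin N₂) (Fin N₃) ℝ)
        (Dc : ℕ → Matrix (Fin N₁) (Fin N₃) ℝ),
        (∀ x : ℝ,
          (∑ i' : Fin m, (Chebyshev.T ℝ ((i' : ℕ) : ℤ)).eval x • A' i') *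
            (∑ j' : Fin n, (Chebyshev.T ℝ (((j' : ℕ) * m : ℕ) : ℤ)).eval x • B' j') =
          ∑ u ∈ Finset.range (m * n), (Chebyshev.T ℝ (u : ℕ)).eval x • Dc u) →
        A' ⟨i, by omega⟩ * B' ⟨j, by omega⟩ = ∑ u ∈ Finset.range (m * n), c u • Dc u := by
    intro k
    induction k with
    | zero =>
      intro i j hi1 hi2 hj1 hj2 hk
      have hj : j = n-1 := by omega
      subst hj
      refine ⟨fun u => if u = (n-1)*m+i then 2 else 0, fun A' B' Dc h => ?_⟩
      have F := (FORM m n N₁ N₂ N₃ hm hn A' B' Dc h).2.2.2.2 i hi1 hi2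
      rw [hindsum m n N₁ N₃ 2 ((n-1)*m+i) (idxlt m n (n-1) i (by omega) (by omega)) Dc,
        F, smul_smul]
      norm_num
    | succ k ih =>
      intro i j hi1 hi2 hj1 hj2 hk
      by_cases hj : j = n-1
      · subst hj
        refine ⟨fun u => if u = (n-1)*m+i then 2 else 0, fun A' B' Dc h => ?_⟩
        have F := (FORM m n N₁ N₂ N₃ hm hn A' B' Dc h).2.2.2.2 i hi1 hi2
        rw [hindsum m n N₁ N₃ 2 ((n-1)*m+i) (idxlt m n (n-1) i (by omega) (by omega)) Dc,
          F, smul_smul]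
        norm_num
      · obtain ⟨c', hc'⟩ := ih (m-i) (j+1) (by omega) (by omega) (by omega) (by omega) (by omega)
        refine ⟨fun u => (if u = j*m+i then 2 else 0) - c' u, fun A' B' Dc h => ?_⟩
        have F := (FORM m n N₁ N₂ N₃ hm hn A' B' Dc h).2.2.2.1 i hi1 hi2 j hj1 (by omega)
        have hY := hc' A' B' Dc h
        have hsplit : ∑ u ∈ Finset.range (m*n), ((if u = j*m+i then (2:ℝ) else 0) - c' u) • Dc u
            = (∑ u ∈ Finset.range (m*n), (if u = j*m+i then (2:ℝ) else 0) • Dc u)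
            - ∑ u ∈ Finset.range (m*n), c' u • Dc u := by
          rw [← Finset.sum_sub_distrib]
          exact Finset.sum_congr rfl fun u _ => sub_smul _ _ _
        rw [hsplit, hindsum m n N₁ N₃ 2 (j*m+i) (idxlt m n j i (by omega) (by omega)) Dc,
          F, ← hY]
        module
  intro i j
  by_cases hi0 : (i:ℕ) = 0
  · refine ⟨fun u => if u = (j:ℕ)*m then 1 else 0, fun A' B' Dc h => ?_⟩
    have F := FORM m n N₁ N₂ N₃ hm hn A' B' Dc h
    rw [hindsum m n N₁ N₃ 1 ((j:ℕ)*m)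
      (by have := idxlt m n (j:ℕ) 0 j.isLt (by omega); simpa using this) Dc, one_smul]
    by_cases hj0 : (j:ℕ) = 0
    · rw [show (j:ℕ)*m = 0 from by rw [hj0]; ring, F.1,
        show A' i = A' ⟨0, by omega⟩ from congrArg A' (Fin.ext hi0),
        show B' j = B' ⟨0, by omega⟩ from congrArg B' (Fin.ext hj0)]
    · rw [F.2.1 (j:ℕ) (by omega) (by have := j.isLt; omega), Fin.eta,
        show A' i = A' ⟨0, by omega⟩ from congrArg A' (Fin.ext hi0)]
  · by_cases hj0 : (j:ℕ) = 0
    · obtain ⟨c', hc'⟩ := claim n (m-(i:ℕ)) 1 (by omega) (by have := i.isLt; omega)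
        (by omega) (by omega) (by omega)
      refine ⟨fun u => (if u = (i:ℕ) then 1 else 0) - (1/2) * c' u, fun A' B' Dc h => ?_⟩
      have F := (FORM m n N₁ N₂ N₃ hm hn A' B' Dc h).2.2.1 (i:ℕ) (by omega)
        (by have := i.isLt; omega)
      have hY := hc' A' B' Dc h
      have hsplit : ∑ u ∈ Finset.range (m*n),
          ((if u = (i:ℕ) then (1:ℝ) else 0) - (1/2) * c' u) • Dc u
          = (∑ u ∈ Finset.range (m*n), (if u = (i:ℕ) then (1:ℝ) else 0) • Dc u)
          - (1/2:ℝ) • ∑ u ∈ Finset.range (m*n), c' u • Dc u := by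
        rw [Finset.smul_sum, ← Finset.sum_sub_distrib]
        refine Finset.sum_congr rfl fun u _ => ?_
        rw [sub_smul, smul_smul]
      rw [hsplit, hindsum m n N₁ N₃ 1 (i:ℕ)
        (by have := idxlt m n 0 (i:ℕ) (by omega) i.isLt; simpa using this) Dc,
        one_smul, ← hY, F,
        show A' i = A' ⟨(i:ℕ), i.isLt⟩ from congrArg A' (Fin.ext rfl),
        show B' j = B' ⟨0, by omega⟩ from congrArg B' (Fin.ext hj0)]
      module
    · obtain ⟨c, hc⟩ := claim n (i:ℕ) (j:ℕ) (by omega) (by have := i.isLt; omega)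
        (by omega) (by have := j.isLt; omega) (by omega)
      refine ⟨c, fun A' B' Dc h => ?_⟩
      have := hc A' B' Dc h
      rwa [Fin.eta, Fin.eta] at this

/-- OrthoPoly coefficient identities: with `p_A = ∑ A_i T_i` and `p_B = ∑ B_j T_{jm}`,
the product `p_A p_B` has a Chebyshev expansion of degree at most `mn - 1`, whose
coefficients are given by the stated formulas; in particular every product `A_i B_j` is an
explicit linear combination of the coefficients `D_0,…,D_{mn-1}`. -/
theorem stmt_12 (m n N₁ N₂ N₃ : ℕ) (hm : 2 ≤ m) (hn : 2 ≤ n)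
    (A : Fin m → Matrix (Fin N₁) (Fin N₂) ℝ)
    (B : Fin n → Matrix (Fin N₂) (Fin N₃) ℝ)
    (pA : ℝ → Matrix (Fin N₁) (Fin N₂) ℝ)
    (hpA : ∀ x, pA x = ∑ i : Fin m, (Polynomial.Chebyshev.T ℝ ((i : ℕ) : ℤ)).eval x • A i)
    (pB : ℝ → Matrix (Fin N₂) (Fin N₃) ℝ)
    (hpB : ∀ x, pB x = ∑ j : Fin n,
      (Polynomial.Chebyshev.T ℝ (((j : ℕ) * m : ℕ) : ℤ)).eval x • B j) :
    (∃ Dc : ℕ → Matrix (Fin N₁) (Fin N₃) ℝ,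
      ∀ x : ℝ, pA x * pB x =
        ∑ u ∈ Finset.range (m * n), (Polynomial.Chebyshev.T ℝ (u : ℕ)).eval x • Dc u) ∧
    (∀ Dc : ℕ → Matrix (Fin N₁) (Fin N₃) ℝ,
      (∀ x : ℝ, pA x * pB x =
        ∑ u ∈ Finset.range (m * n), (Polynomial.Chebyshev.T ℝ (u : ℕ)).eval x • Dc u) →
      Dc 0 = A ⟨0, by omega⟩ * B ⟨0, by omega⟩ ∧
      (∀ (j : ℕ) (_hj1 : 1 ≤ j) (_hj2 : j ≤ n - 1),
        Dc (j * m) = A ⟨0, by omega⟩ * B ⟨j, by omega⟩) ∧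
      (∀ (i : ℕ) (_hi1 : 1 ≤ i) (_hi2 : i ≤ m - 1),
        Dc i = A ⟨i, by omega⟩ * B ⟨0, by omega⟩ +
          (1 / 2 : ℝ) • (A ⟨m - i, by omega⟩ * B ⟨1, by omega⟩)) ∧
      (∀ (i : ℕ) (_hi1 : 1 ≤ i) (_hi2 : i ≤ m - 1) (j : ℕ) (_hj1 : 1 ≤ j) (_hj2 : j ≤ n - 2),
        Dc (j * m + i) = (1 / 2 : ℝ) • (A ⟨i, by omega⟩ * B ⟨j, by omega⟩) +
          (1 / 2 : ℝ) • (A ⟨m - i, by omega⟩ * B ⟨j + 1, by omega⟩)) ∧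
      (∀ (i : ℕ) (_hi1 : 1 ≤ i) (_hi2 : i ≤ m - 1),
        Dc ((n - 1) * m + i) = (1 / 2 : ℝ) • (A ⟨i, by omega⟩ * B ⟨n - 1, by omega⟩))) ∧
    (∀ i : Fin m, ∀ j : Fin n, ∃ c : ℕ → ℝ,
      ∀ (A' : Fin m → Matrix (Fin N₁) (Fin N₂) ℝ)
        (B' : Fin n → Matrix (Fin N₂) (Fin N₃) ℝ)
        (Dc : ℕ → Matrix (Fin N₁) (Fin N₃) ℝ),
        (∀ x : ℝ,
          (∑ i' : Fin m, (Polynomial.Chebyshev.T ℝ ((i' : ℕ) : ℤ)).eval x • A' i') *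
            (∑ j' : Fin n, (Polynomial.Chebyshev.T ℝ (((j' : ℕ) * m : ℕ) : ℤ)).eval x • B' j') =
          ∑ u ∈ Finset.range (m * n), (Polynomial.Chebyshev.T ℝ (u : ℕ)).eval x • Dc u) →
        A' i * B' j = ∑ u ∈ Finset.range (m * n), c u • Dc u) := by
  refine ⟨⟨DD m n N₁ N₂ N₃ A B, fun x => ?_⟩, fun Dc hDc => ?_, ?_⟩
  · rw [hpA, hpB]
    exact expand m n N₁ N₂ N₃ hm hn A B x
  · exact FORM m n N₁ N₂ N₃ hm hn A B Dc (fun x => by rw [← hpA, ← hpB]; exact hDc x)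
  · exact RECOV m n N₁ N₂ N₃ hm hn
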